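/- Let ε ∈ (0,1] and let h(x) = 6x²(1 − ε U((x₀−x)/x₀)) for 0 ≤ x < x₀ and h(x) = 6x² for x ≥ x₀, with x₀ = (3/5)^{1/4} and U(τ) = (7τ² − 8τ + 2)τ². Then ∫₀¹ h(tx)(1−x)/x dx ≤ t² for all t ≥ 0, but ∫₀^∞ h(t)/(t(1+t⁴)) dt > 3π/2. Hence h is a counterexample to Khabibullin's conjecture (second formulation) with n = 2, α = 2. -/

import Mathlib

open MeasureTheory Real

noncomputable def U (τ : ℝ) : ℝ := (7 * τ^2 - 8 * τ + 2) * τ^2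

noncomputable def x₀ : ℝ := (3/5 : ℝ) ^ ((1:ℝ)/4)

noncomputable def h (ε x : ℝ) : ℝ :=
  if x < x₀ then 6 * x^2 * (1 - ε * U ((x₀ - x) / x₀)) else 6 * x^2

lemma x0_pos : 0 < x₀ := Real.rpow_pos_of_pos (by norm_num) _

lemma x0_pow : x₀ ^ (4:ℕ) = 3/5 := by
  rw [x₀, ← Real.rpow_natCast ((3/5:ℝ) ^ ((1:ℝ)/4)) 4, ← Real.rpow_mul (by norm_num)]
  norm_num

set_option maxHeartbeats 1000000 in
lemma ipoly (b a0 a1 a2 a3 a4 a5 a6 a7 a8 a9 a10 a11 a12 a13 a14 a15 : ℝ) :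
    ∫ x in (0:ℝ)..b, (a0 + a1*x + a2*x^2 + a3*x^3 + a4*x^4 + a5*x^5 + a6*x^6 + a7*x^7
      + a8*x^8 + a9*x^9 + a10*x^10 + a11*x^11 + a12*x^12 + a13*x^13 + a14*x^14 + a15*x^15)
    = a0*b + a1*b^2/2 + a2*b^3/3 + a3*b^4/4 + a4*b^5/5 + a5*b^6/6 + a6*b^7/7 + a7*b^8/8
      + a8*b^9/9 + a9*b^10/10 + a10*b^11/11 + a11*b^12/12 + a12*b^13/13 + a13*b^14/14
      + a14*b^15/15 + a15*b^16/16 := by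
  have key : ∀ x : ℝ, HasDerivAt (fun x : ℝ => a0*x^1 + a1*x^2/2 + a2*x^3/3 + a3*x^4/4 + a4*x^5/5
      + a5*x^6/6 + a6*x^7/7 + a7*x^8/8 + a8*x^9/9 + a9*x^10/10 + a10*x^11/11 + a11*x^12/12
      + a12*x^13/13 + a13*x^14/14 + a14*x^15/15 + a15*x^16/16)
      (a0 + a1*x + a2*x^2 + a3*x^3 + a4*x^4 + a5*x^5 + a6*x^6 + a7*x^7
      + a8*x^8 + a9*x^9 + a10*x^10 + a11*x^11 + a12*x^12 + a13*x^13 + a14*x^14 + a15*x^15) x := by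
    intro x
    have H := ((((((((((((((((hasDerivAt_pow 1 x).const_mul a0).add
        (((hasDerivAt_pow 2 x).const_mul a1).div_const 2)).add
        (((hasDerivAt_pow 3 x).const_mul a2).div_const 3)).add
        (((hasDerivAt_pow 4 x).const_mul a3).div_const 4)).add
        (((hasDerivAt_pow 5 x).const_mul a4).div_const 5)).add
        (((hasDerivAt_pow 6 x).const_mul a5).div_const 6)).add
        (((hasDerivAt_pow 7 x).const_mul a6).div_const 7)).add
        (((hasDerivAt_pow 8 x).const_mul a7).div_const 8)).add
        (((hasDerivAt_pow 9 x).const_mul a8).div_const 9)).add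
        (((hasDerivAt_pow 10 x).const_mul a9).div_const 10)).add
        (((hasDerivAt_pow 11 x).const_mul a10).div_const 11)).add
        (((hasDerivAt_pow 12 x).const_mul a11).div_const 12)).add
        (((hasDerivAt_pow 13 x).const_mul a12).div_const 13)).add
        (((hasDerivAt_pow 14 x).const_mul a13).div_const 14)).add
        (((hasDerivAt_pow 15 x).const_mul a14).div_const 15)).add
        (((hasDerivAt_pow 16 x).const_mul a15).div_const 16)
    refine H.congr_deriv ?_
    push_cast
    ring
  rw [intervalIntegral.integral_eq_sub_of_hasDerivAt (fun x _ => key x)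
    ((Continuous.intervalIntegrable (by fun_prop) _ _))]
  norm_num


set_option maxHeartbeats 1600000 in
lemma part1 (ε t : ℝ) (hε0 : 0 < ε) (ht : 0 ≤ t) :
    (∫ x in (0:ℝ)..1, h ε (t * x) * (1 - x) / x) ≤ t ^ 2 := by
  have hx0 := x0_pos
  rcases ht.eq_or_lt with rfl | ht0
  · have hz : ∀ x : ℝ, h ε (0 * x) * (1 - x) / x = 0 := by
      intro x
      have h0 : h ε 0 = 0 := by unfold h; split <;> ring
      rw [zero_mul, h0, zero_mul, zero_div]
    simp only [hz]
    norm_num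
  · -- t > 0
    rcases le_or_gt t x₀ with hcase | hcase
    · -- 0 < t ≤ x₀
      have hcong : Set.EqOn (fun x => h ε (t * x) * (1 - x) / x)
          (fun x => 0 + (6*t^2*(1-ε))*x + (6*t^2*(ε*(8*(t/x₀)+1) - 1))*x^2
            + (-(6*t^2*ε*(20*(t/x₀)^2+8*(t/x₀))))*x^3
            + (6*t^2*ε*(20*(t/x₀)^3+20*(t/x₀)^2))*x^4
            + (-(6*t^2*ε*(7*(t/x₀)^4+20*(t/x₀)^3)))*x^5
            + (6*t^2*ε*(7*(t/x₀)^4))*x^6 + 0*x^7 + 0*x^8 + 0*x^9 + 0*x^10 + 0*x^11 + 0*x^12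
            + 0*x^13 + 0*x^14 + 0*x^15) (Set.uIcc 0 1) := by
        intro x hx
        rw [Set.uIcc_of_le (by norm_num : (0:ℝ) ≤ 1)] at hx
        obtain ⟨hx0', hx1'⟩ := hx
        rcases hx0'.eq_or_lt with rfl | hxpos
        · simp [h, hx0]
        · by_cases hlt : t * x < x₀
          · show h ε (t * x) * (1 - x) / x = _
            unfold h U
            rw [if_pos hlt]
            field_simp
            ring
          · have hx1 : x = 1 := by
              have h1 : t * x ≤ t * 1 := by nlinarith
              have h2 : t * 1 ≤ t * x := by
                push_neg at hlt
                calc t * 1 = t := by ring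
                _ ≤ x₀ := hcase
                _ ≤ t * x := hlt
              have := le_antisymm h1 h2
              exact mul_left_cancel₀ ht0.ne' this
            subst hx1
            show h ε (t * 1) * (1 - 1) / 1 = _
            norm_num
            ring
      rw [intervalIntegral.integral_congr hcong, ipoly]
      have hkey : 0*1 + (6*t^2*(1-ε))*1^2/2 + (6*t^2*(ε*(8*(t/x₀)+1) - 1))*1^3/3
            + (-(6*t^2*ε*(20*(t/x₀)^2+8*(t/x₀))))*1^4/4
            + (6*t^2*ε*(20*(t/x₀)^3+20*(t/x₀)^2))*1^5/5
            + (-(6*t^2*ε*(7*(t/x₀)^4+20*(t/x₀)^3)))*1^6/6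
            + (6*t^2*ε*(7*(t/x₀)^4))*1^7/7 + 0*1^8/8 + 0*1^9/9 + 0*1^10/10 + 0*1^11/11
            + 0*1^12/12 + 0*1^13/13 + 0*1^14/14 + 0*1^15/15 + 0*1^16/16
          = t^2 - ε*t^2*(1-t/x₀)^4 := by
        field_simp
        ring
      rw [hkey]
      have : 0 ≤ ε*t^2*(1-t/x₀)^4 := by positivity
      linarith
    · -- t > x₀
      have ht0 : 0 < t := lt_trans hx0 hcase
      set c := x₀ / t with hc
      have hc0 : 0 < c := div_pos hx0 ht0
      have hc1 : c < 1 := (div_lt_one ht0).2 hcase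
      have htc : t * c = x₀ := by rw [hc]; field_simp
      set P1 : ℝ → ℝ := fun x => 0 + (6*t^2*(1-ε))*x + (6*t^2*(ε*(8*(t/x₀)+1) - 1))*x^2
                + (-(6*t^2*ε*(20*(t/x₀)^2+8*(t/x₀))))*x^3
                + (6*t^2*ε*(20*(t/x₀)^3+20*(t/x₀)^2))*x^4
                + (-(6*t^2*ε*(7*(t/x₀)^4+20*(t/x₀)^3)))*x^5
                + (6*t^2*ε*(7*(t/x₀)^4))*x^6 + 0*x^7 + 0*x^8 + 0*x^9 + 0*x^10 + 0*x^11 + 0*x^12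
                + 0*x^13 + 0*x^14 + 0*x^15 with hP1
      set P2 : ℝ → ℝ := fun x => 0 + (6*t^2)*x + (-(6*t^2))*x^2
                + 0*x^3 + 0*x^4 + 0*x^5 + 0*x^6 + 0*x^7 + 0*x^8 + 0*x^9 + 0*x^10 + 0*x^11 + 0*x^12
                + 0*x^13 + 0*x^14 + 0*x^15 with hP2
      have hP1c : Continuous P1 := by rw [hP1]; fun_prop
      have hP2c : Continuous P2 := by rw [hP2]; fun_prop
      -- a.e. equality on (0, c)
      have e1 : ∀ᵐ x : ℝ, x ∈ Set.uIoc (0:ℝ) c → h ε (t * x) * (1 - x) / x = P1 x := by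
        have hae : ∀ᵐ x : ℝ, x ≠ c := by
          refine (MeasureTheory.measure_eq_zero_iff_ae_notMem.mp ?_).mono (fun x hx => hx)
          exact Real.volume_singleton
        filter_upwards [hae] with x hxc hmem
        rw [Set.uIoc_of_le hc0.le] at hmem
        have hxpos : 0 < x := hmem.1
        have hxc' : x < c := lt_of_le_of_ne hmem.2 hxc
        have hlt : t * x < x₀ := by rw [← htc]; exact (mul_lt_mul_iff_right₀ ht0).2 hxc'
        show h ε (t * x) * (1 - x) / x = P1 x
        rw [hP1]
        unfold h U
        rw [if_pos hlt]
        field_simp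
        ring
      have e1' : (fun x => h ε (t * x) * (1 - x) / x) =ᵐ[volume.restrict (Set.uIoc (0:ℝ) c)] P1 := by
        exact (MeasureTheory.ae_restrict_iff' measurableSet_uIoc).2 e1
      have i1 : IntervalIntegrable (fun x => h ε (t * x) * (1 - x) / x) volume 0 c :=
        (hP1c.intervalIntegrable _ _).congr_ae e1'.symm
      -- exact equality on [c, 1]
      have e2 : Set.EqOn (fun x => h ε (t * x) * (1 - x) / x) P2 (Set.uIcc c 1) := by
        intro x hx
        rw [Set.uIcc_of_le hc1.le] at hx
        have hxpos : 0 < x := lt_of_lt_of_le hc0 hx.1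
        have hge : ¬ (t * x < x₀) := by
          push_neg
          rw [← htc]
          exact (mul_le_mul_iff_right₀ ht0).2 hx.1
        show h ε (t * x) * (1 - x) / x = P2 x
        rw [hP2]
        unfold h
        rw [if_neg hge]
        field_simp
        ring
      have e2' : (fun x => h ε (t * x) * (1 - x) / x) =ᵐ[volume.restrict (Set.uIoc c 1)] P2 := by
        exact (MeasureTheory.ae_restrict_iff' measurableSet_uIoc).2
          (Filter.Eventually.of_forall fun x hx => e2 (Set.uIoc_subset_uIcc hx))
      have i2 : IntervalIntegrable (fun x => h ε (t * x) * (1 - x) / x) volume c 1 :=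
        (hP2c.intervalIntegrable _ _).congr_ae e2'.symm
      rw [← intervalIntegral.integral_add_adjacent_intervals i1 i2]
      rw [intervalIntegral.integral_congr_ae e1, intervalIntegral.integral_congr e2]
      have split2 : ∫ x in c..1, P2 x = (∫ x in (0:ℝ)..1, P2 x) - ∫ x in (0:ℝ)..c, P2 x := by
        rw [← intervalIntegral.integral_add_adjacent_intervals
          (hP2c.intervalIntegrable 0 c) (hP2c.intervalIntegrable c 1)]
        ring
      rw [split2, hP1, hP2, ipoly, ipoly, ipoly]
      have hx0ne : x₀ ≠ 0 := hx0.ne'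
      have htne : t ≠ 0 := ht0.ne'
      rw [hc]
      have : ∀ A B : ℝ, A = B → A ≤ B := fun A B hAB => hAB.le
      apply this
      field_simp
      ring

-- the key estimate: K := ∫₀¹ 6 v U(1-v) / (1 + (3/5) v⁴) dv < 0
set_option maxHeartbeats 1600000 in
lemma K_neg : ∫ v in (0:ℝ)..1, 6*v*U (1-v)/(1+(3/5)*v^4) ≤ -463/125125 + 27/122500 := by
  have hden : ∀ v : ℝ, (0:ℝ) < 1 + (3/5)*v^4 := fun v => by positivity
  have hsplit : ∀ v : ℝ, 6*v*U (1-v)/(1+(3/5)*v^4)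
      = (0 + 6*v + (-48)*v^2 + 120*v^3 + (-120)*v^4 + (192/5)*v^5 + (144/5)*v^6 + (-72)*v^7
        + 72*v^8 + (-576/25)*v^9 + (-432/25)*v^10 + (216/5)*v^11 + (-216/5)*v^12
        + (378/25)*v^13 + 0*v^14 + 0*v^15)
        - (162/125)*v^13*U (1-v)/(1+(3/5)*v^4) := by
    intro v
    have := (hden v).ne'
    unfold U
    field_simp
    ring
  have hcont2 : Continuous (fun v : ℝ => (162/125)*v^13*U (1-v)/(1+(3/5)*v^4)) := by
    apply Continuous.div
    · unfold U; fun_prop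
    · fun_prop
    · exact fun v => (hden v).ne'
  have hcont1 : Continuous (fun v : ℝ => (0:ℝ) + 6*v + (-48)*v^2 + 120*v^3 + (-120)*v^4
      + (192/5)*v^5 + (144/5)*v^6 + (-72)*v^7 + 72*v^8 + (-576/25)*v^9 + (-432/25)*v^10
      + (216/5)*v^11 + (-216/5)*v^12 + (378/25)*v^13 + 0*v^14 + 0*v^15) := by fun_prop
  have hre : (∫ v in (0:ℝ)..1, 6*v*U (1-v)/(1+(3/5)*v^4))
      = (∫ v in (0:ℝ)..1, (0 + 6*v + (-48)*v^2 + 120*v^3 + (-120)*v^4 + (192/5)*v^5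
        + (144/5)*v^6 + (-72)*v^7 + 72*v^8 + (-576/25)*v^9 + (-432/25)*v^10 + (216/5)*v^11
        + (-216/5)*v^12 + (378/25)*v^13 + 0*v^14 + 0*v^15))
      - ∫ v in (0:ℝ)..1, (162/125)*v^13*U (1-v)/(1+(3/5)*v^4) := by
    rw [← intervalIntegral.integral_sub (hcont1.intervalIntegrable _ _)
      (hcont2.intervalIntegrable _ _)]
    exact intervalIntegral.integral_congr fun v _ => hsplit v
  rw [hre, ipoly]
  have hcontL : Continuous (fun v : ℝ => (0:ℝ) + 0*v + 0*v^2 + 0*v^3 + 0*v^4 + 0*v^5 + 0*v^6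
      + 0*v^7 + 0*v^8 + 0*v^9 + 0*v^10 + 0*v^11 + 0*v^12 + (-324/875)*v^13 + (648/875)*v^14
      + (-324/875)*v^15) := by fun_prop
  have hptw : ∀ v ∈ Set.Icc (0:ℝ) 1, ((0:ℝ) + 0*v + 0*v^2 + 0*v^3 + 0*v^4 + 0*v^5 + 0*v^6
      + 0*v^7 + 0*v^8 + 0*v^9 + 0*v^10 + 0*v^11 + 0*v^12 + (-324/875)*v^13 + (648/875)*v^14
      + (-324/875)*v^15) ≤ (162/125)*v^13*U (1-v)/(1+(3/5)*v^4) := by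
    intro v hv
    rw [le_div_iff₀ (hden v)]
    unfold U
    have hv0 : (0:ℝ) ≤ v := hv.1
    have hA : 0 ≤ v^13*(1-v)^2*(7*v-3)^2 := by positivity
    have hB : 0 ≤ v^17*(1-v)^2 := by positivity
    nlinarith [hA, hB]
  have hmono := intervalIntegral.integral_mono_on (by norm_num : (0:ℝ) ≤ 1)
    (hcontL.intervalIntegrable (μ := volume) _ _) (hcont2.intervalIntegrable _ _) hptw
  rw [ipoly] at hmono
  norm_num at hmono ⊢
  linarith

noncomputable def q (t : ℝ) : ℝ := 6*t*U ((x₀-t)/x₀)/(1+t^4)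

lemma hqc : Continuous q := by
  apply Continuous.div
  · unfold U; fun_prop
  · fun_prop
  · intro t; positivity

lemma qint_neg : ∫ t in (0:ℝ)..x₀, q t < 0 := by
  have hx0 := x0_pos
  have hsub := intervalIntegral.integral_comp_mul_right (a := 0) (b := 1) q hx0.ne'
  rw [zero_mul, one_mul] at hsub
  have heq : (∫ v in (0:ℝ)..1, q (v * x₀)) = ∫ v in (0:ℝ)..1, x₀ * (6*v*U (1-v)/(1+(3/5)*v^4)) := by
    apply intervalIntegral.integral_congr
    intro v _
    show q (v * x₀) = _
    unfold q
    have harg : (x₀ - v*x₀)/x₀ = 1 - v := by field_simp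
    have h4 : (v*x₀)^4 = (3/5)*v^4 := by rw [mul_pow, x0_pow]; ring
    rw [harg, h4]
    ring
  rw [heq, intervalIntegral.integral_const_mul] at hsub
  have hK : (∫ v in (0:ℝ)..1, 6*v*U (1-v)/(1+(3/5)*v^4)) < 0 :=
    lt_of_le_of_lt K_neg (by norm_num)
  have : (∫ t in (0:ℝ)..x₀, q t) = x₀ * (x₀ * ∫ v in (0:ℝ)..1, 6*v*U (1-v)/(1+(3/5)*v^4)) := by
    rw [smul_eq_mul] at hsub
    have h2 := congrArg (fun y => x₀ * y) hsub
    rw [← mul_assoc x₀ x₀⁻¹, mul_inv_cancel₀ hx0.ne', one_mul] at h2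
    linarith [h2]
  rw [this]
  have hx2 : 0 < x₀ * x₀ := mul_pos hx0 hx0
  nlinarith
set_option maxHeartbeats 1000000 in
lemma part2 (ε : ℝ) (hε0 : 0 < ε) :
    3 * π / 2 < ∫ t in Set.Ioi (0:ℝ), h ε t / (t * (1 + t^4)) := by
  have hx0 := x0_pos
  -- derivative of 3 arctan(t²)
  have hderiv : ∀ t : ℝ, HasDerivAt (fun t : ℝ => 3 * arctan (t^2)) (6*t/(1+t^4)) t := by
    intro t
    have hp : HasDerivAt (fun t : ℝ => t^2) (2*t) t := by
      simpa using hasDerivAt_pow 2 t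
    have h1 := (Real.hasDerivAt_arctan (t^2)).comp t hp
    have h2 := h1.const_mul (3:ℝ)
    refine h2.congr_deriv ?_
    have : (1:ℝ) + (t^2)^2 = 1 + t^4 := by ring
    field_simp [this]
    ring
  have hcont : ContinuousWithinAt (fun t : ℝ => 3 * arctan (t^2)) (Set.Ici 0) 0 :=
    (continuous_const.mul (Real.continuous_arctan.comp (continuous_pow 2))).continuousWithinAt
  have hpos : ∀ x ∈ Set.Ioi (0:ℝ), 0 ≤ 6*x/(1+x^4) := by
    intro x hx
    have : (0:ℝ) < x := hx
    positivity
  have hlim : Filter.Tendsto (fun t : ℝ => 3 * arctan (t^2)) Filter.atTop (nhds (3 * (π/2))) := by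
    have h2 : Filter.Tendsto (fun t : ℝ => t^2) Filter.atTop Filter.atTop :=
      Filter.tendsto_pow_atTop (by norm_num)
    exact ((Real.tendsto_arctan_atTop.mono_right nhdsWithin_le_nhds).comp h2).const_mul 3
  have hval1 : ∫ x in Set.Ioi (0:ℝ), 6*x/(1+x^4) = 3*π/2 := by
    rw [MeasureTheory.integral_Ioi_of_hasDerivAt_of_nonneg hcont (fun x _ => hderiv x) hpos hlim]
    norm_num [Real.arctan_zero]
    ring
  have hint1 : IntegrableOn (fun x : ℝ => 6*x/(1+x^4)) (Set.Ioi 0) :=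
    MeasureTheory.integrableOn_Ioi_deriv_of_nonneg hcont (fun x _ => hderiv x) hpos hlim
  -- indicator decomposition
  have key : ∀ t ∈ Set.Ioi (0:ℝ), h ε t / (t * (1 + t^4))
      = 6*t/(1+t^4) - ε * (Set.Ioo (0:ℝ) x₀).indicator q t := by
    intro t ht
    have ht0 : (0:ℝ) < t := ht
    have hd : (0:ℝ) < 1 + t^4 := by positivity
    by_cases hlt : t < x₀
    · rw [Set.indicator_of_mem (Set.mem_Ioo.2 ⟨ht0, hlt⟩)]
      unfold h q
      rw [if_pos hlt]
      field_simp
    · rw [Set.indicator_of_notMem (fun hm => hlt hm.2)]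
      unfold h
      rw [if_neg hlt]
      field_simp
      ring
  have hqint : Integrable ((Set.Ioo (0:ℝ) x₀).indicator q) (volume.restrict (Set.Ioi 0)) := by
    apply MeasureTheory.Integrable.restrict
    exact ((hqc.integrableOn_Icc).mono_set Set.Ioo_subset_Icc_self).integrable_indicator measurableSet_Ioo
  have hrw : ∫ t in Set.Ioi (0:ℝ), h ε t / (t * (1 + t^4))
      = (∫ t in Set.Ioi (0:ℝ), 6*t/(1+t^4))
        - ε * ∫ t in Set.Ioi (0:ℝ), (Set.Ioo (0:ℝ) x₀).indicator q t := by
    rw [MeasureTheory.setIntegral_congr_fun measurableSet_Ioi key]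
    rw [MeasureTheory.integral_sub hint1 (hqint.const_mul ε)]
    rw [MeasureTheory.integral_const_mul]
  have hind : ∫ t in Set.Ioi (0:ℝ), (Set.Ioo (0:ℝ) x₀).indicator q t = ∫ t in (0:ℝ)..x₀, q t := by
    rw [MeasureTheory.setIntegral_indicator measurableSet_Ioo]
    rw [Set.inter_eq_self_of_subset_right Set.Ioo_subset_Ioi_self]
    rw [intervalIntegral.integral_of_le hx0.le, MeasureTheory.integral_Ioc_eq_integral_Ioo]
  rw [hrw, hval1, hind]
  have := qint_neg
  nlinarith

theorem h_counterexample (ε : ℝ) (hε0 : 0 < ε) (hε1 : ε ≤ 1) :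
    (∀ t : ℝ, 0 ≤ t → (∫ x in (0:ℝ)..1, h ε (t * x) * (1 - x) / x) ≤ t ^ 2) ∧
    3 * π / 2 < ∫ t in Set.Ioi (0:ℝ), h ε t / (t * (1 + t^4)) :=
  ⟨fun t ht => part1 ε t hε0 ht, part2 ε hε0⟩
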